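/- Let q_0 ∈ ℂ and consider the q_0-harmonic polynomials in ℂ[x,y] (two variables). If q_0 is not of the form −2/d for any integer d ≥ 2, then the space of q_0-harmonic polynomials is the ℂ-linear span of 1 and x − y. If q_0 = −2/d for some integer d ≥ 2, then the space of q_0-harmonic polynomials is the ℂ-linear span of 1, x − y, and (x − y)(x + y)^{d−1}. -/

import Mathlib

open MvPolynomial

/-- The `q`-Steenrod operator `P_k` on `K[x_1,…,x_n]`:
`P_k(p) = ∑ i, x_i^k • (p + q • x_i • ∂p/∂x_i)`. -/
noncomputable def steenrodP (K : Type) [Field K] (q : K) (n k : ℕ) :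
    Module.End K (MvPolynomial (Fin n) K) :=
  ∑ i : Fin n, (LinearMap.mulLeft K (X i ^ k : MvPolynomial (Fin n) K)) ∘ₗ
    (LinearMap.id + q • ((LinearMap.mulLeft K (X i : MvPolynomial (Fin n) K)) ∘ₗ
      (pderiv i).toLinearMap))

/-- The dual `q`-Steenrod operator `P_k^*` on `K[x_1,…,x_n]`:
`P_k^*(p) = ∑ i, (∂^k p/∂x_i^k + q • x_i • ∂^{k+1} p/∂x_i^{k+1})`. -/
noncomputable def steenrodPdual (K : Type) [Field K] (q : K) (n k : ℕ) :
    Module.End K (MvPolynomial (Fin n) K) :=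
  ∑ i : Fin n,
    ((((pderiv i).toLinearMap : Module.End K (MvPolynomial (Fin n) K)) ^ k)
      + q • ((LinearMap.mulLeft K (X i : MvPolynomial (Fin n) K)) ∘ₗ
          ((((pderiv i).toLinearMap : Module.End K (MvPolynomial (Fin n) K)) ^ (k+1) : Module.End K (MvPolynomial (Fin n) K)) : MvPolynomial (Fin n) K →ₗ[K] MvPolynomial (Fin n) K)))

/-- The bilinear form `B(p,r) = ∑_m m! ⬝ p_m ⬝ r_m` over exponent vectors `m`. -/
noncomputable def formB {K : Type} [Field K] {n : ℕ} (p r : MvPolynomial (Fin n) K) : K :=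
  ∑ m ∈ p.support, (∏ i, ((m i).factorial : K)) * p.coeff m * r.coeff m

/-- `p` is `q`-harmonic if it is killed by all the dual `q`-Steenrod operators. -/
def IsQHarmonic {K : Type} [Field K] {n : ℕ} (q : K) (p : MvPolynomial (Fin n) K) : Prop :=
  ∀ k : ℕ, 1 ≤ k → steenrodPdual K q n k p = 0

/-- The space of `q`-hit polynomials: the span of the ranges of the `P_k`, `k ≥ 1`. -/
noncomputable def qHit (K : Type) [Field K] (q : K) (n : ℕ) :
    Submodule K (MvPolynomial (Fin n) K) :=
  Submodule.span K (⋃ k ∈ {k : ℕ | 1 ≤ k}, Set.range (steenrodP K q n k))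

/-- For a list `λ = [λ_1, …, λ_m]`, the operator `P_λ = P_{λ_1} ∘ ⋯ ∘ P_{λ_m}`. -/
noncomputable def steenrodPList (K : Type) [Field K] (q : K) (n : ℕ) (l : List ℕ) :
    Module.End K (MvPolynomial (Fin n) K) :=
  (l.map (steenrodP K q n)).prod

namespace QH18

/-- coefficient extraction in two variables -/
noncomputable def cf (p : MvPolynomial (Fin 2) ℂ) (a b : ℕ) : ℂ :=
  coeff (Finsupp.single 0 a + Finsupp.single 1 b) p

/-- coefficient weight appearing in the dual Steenrod operator -/
noncomputable def Aw (q : ℂ) (s k : ℕ) : ℂ := ((s+k).descFactorial k : ℕ) * (1 + q * s)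

/-- degree-`d` coefficient profile of `(x-y)(x+y)^(d-1)` -/
noncomputable def gam (d a : ℕ) : ℂ := (d.choose a : ℂ) * (2*(a:ℂ) - (d:ℂ)) / (d:ℂ)

lemma coeff_pderiv {i : Fin 2} (p : MvPolynomial (Fin 2) ℂ) (m : Fin 2 →₀ ℕ) :
    coeff m (pderiv i p) = (m i + 1 : ℕ) * coeff (m + Finsupp.single i 1) p := by
  induction p using MvPolynomial.induction_on' with
  | monomial s a =>
    rw [pderiv_monomial, coeff_monomial, coeff_monomial]
    rcases Nat.eq_zero_or_pos (s i) with h | h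
    · have hne : s ≠ m + Finsupp.single i 1 := by
        intro he; rw [he] at h; simp at h
      rw [if_neg hne, mul_zero]; simp [h]
    · have hle : Finsupp.single i 1 ≤ s := by
        rw [Finsupp.single_le_iff]; exact h
      by_cases he : s = m + Finsupp.single i 1
      · have h1 : s - Finsupp.single i 1 = m := by
          rw [he]; simp
        have h2 : s i = m i + 1 := by rw [he]; simp
        rw [if_pos h1, if_pos he, h2]; push_cast; ring
      · have hne : s - Finsupp.single i 1 ≠ m := by
          intro h1; apply he; rw [← h1, tsub_add_cancel_of_le hle]
        rw [if_neg hne, if_neg he, mul_zero]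
  | add p q hp hq => simp [hp, hq, mul_add]

lemma coeff_pderiv_iterate {i : Fin 2} (k : ℕ) (p : MvPolynomial (Fin 2) ℂ) (m : Fin 2 →₀ ℕ) :
    coeff m ((pderiv i)^[k] p) =
      ((m i + k).descFactorial k : ℕ) * coeff (m + Finsupp.single i k) p := by
  induction k generalizing p with
  | zero => simp
  | succ k ih =>
    rw [Function.iterate_succ_apply, ih, coeff_pderiv]
    have h1 : m + Finsupp.single i k + Finsupp.single i 1 = m + Finsupp.single i (k+1) := by
      rw [add_assoc, ← Finsupp.single_add]
    have h2 : (m + Finsupp.single i k) i = m i + k := by simp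
    rw [h1, h2]
    have h3 : (m i + (k+1)).descFactorial (k+1) = (m i + k + 1) * (m i + k).descFactorial k := by
      have : m i + (k+1) = (m i + k) + 1 := by omega
      rw [this, Nat.succ_descFactorial_succ]
    rw [h3]; push_cast; ring

lemma sub_single_add (m : Fin 2 →₀ ℕ) (i : Fin 2) (k : ℕ) (h : m i ≠ 0) :
    m - Finsupp.single i 1 + Finsupp.single i (k+1) = m + Finsupp.single i k := by
  ext j
  simp only [Finsupp.add_apply, Finsupp.coe_tsub, Pi.sub_apply, Finsupp.single_apply]
  by_cases hj : i = j
  · subst hj; simp; omega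
  · simp [hj]

lemma coeff_X_mul_iter {i : Fin 2} (k : ℕ) (p : MvPolynomial (Fin 2) ℂ) (m : Fin 2 →₀ ℕ) :
    coeff m (X i * (pderiv i)^[k+1] p) =
      ((m i + k).descFactorial (k+1) : ℕ) * coeff (m + Finsupp.single i k) p := by
  rw [coeff_X_mul']
  by_cases h : i ∈ m.support
  · rw [if_pos h, coeff_pderiv_iterate]
    rw [Finsupp.mem_support_iff] at h
    have h1 : ((m - Finsupp.single i 1 : Fin 2 →₀ ℕ)) i = m i - 1 := by simp
    rw [h1, sub_single_add m i k h]
    have h2 : m i - 1 + (k+1) = m i + k := by omega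
    rw [h2]
  · rw [if_neg h]
    rw [Finsupp.notMem_support_iff] at h
    rw [h]
    have : (k).descFactorial (k+1) = 0 := Nat.descFactorial_eq_zero_iff_lt.mpr (by omega)
    rw [zero_add, this, Nat.cast_zero, zero_mul]

lemma coeff_steenrodPdual (q : ℂ) (k : ℕ) (p : MvPolynomial (Fin 2) ℂ) (m : Fin 2 →₀ ℕ) :
    coeff m (steenrodPdual ℂ q 2 k p) =
      Aw q (m 0) k * coeff (m + Finsupp.single 0 k) p
      + Aw q (m 1) k * coeff (m + Finsupp.single 1 k) p := by
  have hexp : steenrodPdual ℂ q 2 k p =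
      (pderiv 0)^[k] p + q • (X 0 * (pderiv (0:Fin 2))^[k+1] p)
      + ((pderiv 1)^[k] p + q • (X 1 * (pderiv (1:Fin 2))^[k+1] p)) := by
    rw [steenrodPdual, Fin.sum_univ_two]
    simp [LinearMap.add_apply, LinearMap.smul_apply, LinearMap.comp_apply,
      LinearMap.mulLeft_apply, Module.End.pow_apply]
  rw [hexp]
  simp only [coeff_add, coeff_smul, smul_eq_mul]
  rw [coeff_pderiv_iterate, coeff_pderiv_iterate, coeff_X_mul_iter, coeff_X_mul_iter]
  have hdf : ∀ s : ℕ, (s + k).descFactorial (k+1) = s * (s+k).descFactorial k := by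
    intro s
    rw [Nat.descFactorial_succ]
    congr 1
    omega
  rw [Aw, Aw, hdf, hdf]
  push_cast; ring

lemma fin2_eta (m : Fin 2 →₀ ℕ) :
    m = Finsupp.single 0 (m 0) + Finsupp.single 1 (m 1) := by
  ext j
  fin_cases j <;> simp [Finsupp.single_apply]

lemma eval0 (a b : ℕ) : ((Finsupp.single 0 a + Finsupp.single 1 b : Fin 2 →₀ ℕ)) 0 = a := by
  simp [Finsupp.single_apply]

lemma eval1 (a b : ℕ) : ((Finsupp.single 0 a + Finsupp.single 1 b : Fin 2 →₀ ℕ)) 1 = b := by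
  simp [Finsupp.single_apply]

lemma shift0 (a b k : ℕ) :
    (Finsupp.single 0 a + Finsupp.single 1 b : Fin 2 →₀ ℕ) + Finsupp.single 0 k
      = Finsupp.single 0 (a+k) + Finsupp.single 1 b := by
  rw [add_right_comm, ← Finsupp.single_add]

lemma shift1 (a b k : ℕ) :
    (Finsupp.single 0 a + Finsupp.single 1 b : Fin 2 →₀ ℕ) + Finsupp.single 1 k
      = Finsupp.single 0 a + Finsupp.single 1 (b+k) := by
  rw [add_assoc, ← Finsupp.single_add]

lemma pair_eq_iff {a b a' b' : ℕ} :
    (Finsupp.single 0 a + Finsupp.single 1 b : Fin 2 →₀ ℕ)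
      = Finsupp.single 0 a' + Finsupp.single 1 b' ↔ a = a' ∧ b = b' := by
  constructor
  · intro h
    constructor
    · have := congrArg (fun f : Fin 2 →₀ ℕ => f 0) h
      simpa [eval0] using this
    · have := congrArg (fun f : Fin 2 →₀ ℕ => f 1) h
      simpa [eval1] using this
  · rintro ⟨rfl, rfl⟩; rfl

/-- the coefficient characterization of being `q`-harmonic -/
lemma harmonic_iff (q : ℂ) (p : MvPolynomial (Fin 2) ℂ) :
    IsQHarmonic q p ↔
      ∀ k, 1 ≤ k → ∀ s t : ℕ,
        Aw q s k * cf p (s+k) t + Aw q t k * cf p s (t+k) = 0 := by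
  constructor
  · intro H k hk s t
    have h0 := coeff_steenrodPdual q k p (Finsupp.single 0 s + Finsupp.single 1 t)
    rw [H k hk, coeff_zero, eval0, eval1, shift0, shift1] at h0
    exact (h0.symm.trans rfl) ▸ h0.symm
  · intro H k hk
    apply MvPolynomial.ext
    intro m
    rw [coeff_zero, coeff_steenrodPdual]
    have hm := fin2_eta m
    rw [hm, eval0, eval1, shift0, shift1]
    exact H k hk (m 0) (m 1)

lemma cf_add (p r : MvPolynomial (Fin 2) ℂ) (a b : ℕ) :
    cf (p + r) a b = cf p a b + cf r a b := coeff_add _ _ _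

lemma cf_sub (p r : MvPolynomial (Fin 2) ℂ) (a b : ℕ) :
    cf (p - r) a b = cf p a b - cf r a b := by simp [cf]

lemma cf_one (a b : ℕ) : cf 1 a b = if a = 0 ∧ b = 0 then 1 else 0 := by
  rw [cf, coeff_one]
  by_cases h : a = 0 ∧ b = 0
  · obtain ⟨rfl, rfl⟩ := h; simp
  · rw [if_neg, if_neg h]
    intro he
    apply h
    have : (0 : Fin 2 →₀ ℕ) = Finsupp.single 0 0 + Finsupp.single 1 0 := by simp
    rw [this] at he
    exact ⟨(pair_eq_iff.mp he.symm).1, (pair_eq_iff.mp he.symm).2⟩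

lemma cf_X0 (a b : ℕ) : cf (X 0) a b = if a = 1 ∧ b = 0 then 1 else 0 := by
  rw [cf, coeff_X']
  by_cases h : a = 1 ∧ b = 0
  · obtain ⟨rfl, rfl⟩ := h; simp
  · rw [if_neg, if_neg h]
    intro he
    apply h
    have : (Finsupp.single (0:Fin 2) 1 : Fin 2 →₀ ℕ) = Finsupp.single 0 1 + Finsupp.single 1 0 := by simp
    rw [this] at he
    exact ⟨(pair_eq_iff.mp he).1.symm, (pair_eq_iff.mp he).2.symm⟩

lemma cf_X1 (a b : ℕ) : cf (X 1) a b = if a = 0 ∧ b = 1 then 1 else 0 := by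
  rw [cf, coeff_X']
  by_cases h : a = 0 ∧ b = 1
  · obtain ⟨rfl, rfl⟩ := h; simp
  · rw [if_neg, if_neg h]
    intro he
    apply h
    have : (Finsupp.single (1:Fin 2) 1 : Fin 2 →₀ ℕ) = Finsupp.single 0 0 + Finsupp.single 1 1 := by simp
    rw [this] at he
    exact ⟨(pair_eq_iff.mp he).1.symm, (pair_eq_iff.mp he).2.symm⟩

lemma sub0 (a b : ℕ) (h : a ≠ 0) :
    (Finsupp.single 0 a + Finsupp.single 1 b : Fin 2 →₀ ℕ) - Finsupp.single 0 1
      = Finsupp.single 0 (a-1) + Finsupp.single 1 b := by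
  ext j
  fin_cases j <;>
    simp [Finsupp.single_apply]

lemma sub1 (a b : ℕ) (h : b ≠ 0) :
    (Finsupp.single 0 a + Finsupp.single 1 b : Fin 2 →₀ ℕ) - Finsupp.single 1 1
      = Finsupp.single 0 a + Finsupp.single 1 (b-1) := by
  ext j
  fin_cases j <;>
    simp [Finsupp.single_apply]

lemma cf_X0_mul (u : MvPolynomial (Fin 2) ℂ) (a b : ℕ) :
    cf (X 0 * u) a b = if a = 0 then 0 else cf u (a-1) b := by
  rw [cf, coeff_X_mul']
  by_cases h : a = 0
  · rw [if_pos h, if_neg]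
    simp [Finsupp.mem_support_iff, eval0, h]
  · rw [if_neg h, if_pos, sub0 a b h]; rfl
    simp [Finsupp.mem_support_iff, eval0, h]

lemma cf_X1_mul (u : MvPolynomial (Fin 2) ℂ) (a b : ℕ) :
    cf (X 1 * u) a b = if b = 0 then 0 else cf u a (b-1) := by
  rw [cf, coeff_X_mul']
  by_cases h : b = 0
  · rw [if_pos h, if_neg]
    simp [Finsupp.mem_support_iff, eval1, h]
  · rw [if_neg h, if_pos, sub1 a b h]; rfl
    simp [Finsupp.mem_support_iff, eval1, h]

lemma cf_pow (e a b : ℕ) :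
    cf ((X 0 + X 1)^e) a b = if a + b = e then (e.choose a : ℂ) else 0 := by
  induction e generalizing a b with
  | zero =>
    rw [pow_zero, cf_one]
    by_cases h : a = 0 ∧ b = 0
    · obtain ⟨rfl, rfl⟩ := h; simp
    · rw [if_neg h, if_neg]; omega
  | succ e ih =>
    rw [pow_succ, mul_comm, add_mul, cf_add, cf_X0_mul, cf_X1_mul, ih, ih]
    by_cases ha : a = 0
    · subst ha
      by_cases hb : b = 0
      · subst hb; simp
      · rw [if_pos rfl, if_neg hb, zero_add]
        by_cases hbe : b - 1 = e
        · rw [if_pos (by omega : 0 + (b-1) = e), if_pos (by omega : 0 + b = e + 1)]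
          simp
        · rw [if_neg (by omega : ¬ 0 + (b-1) = e), if_neg (by omega : ¬ 0 + b = e + 1)]
    · by_cases hb : b = 0
      · subst hb
        rw [if_neg ha, if_pos rfl, add_zero]
        by_cases hae : a - 1 = e
        · rw [if_pos (by omega : a - 1 + 0 = e), if_pos (by omega : a + 0 = e + 1)]
          have h1 : a = e + 1 := by omega
          subst h1
          simp
        · rw [if_neg (by omega : ¬ a - 1 + 0 = e), if_neg (by omega : ¬ a + 0 = e + 1)]
      · rw [if_neg ha, if_neg hb]
        by_cases he : a + b = e + 1
        · rw [if_pos (by omega : a - 1 + b = e), if_pos (by omega : a + (b-1) = e),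
            if_pos he]
          obtain ⟨a', rfl⟩ : ∃ a', a = a' + 1 := ⟨a - 1, by omega⟩
          rw [Nat.choose_succ_succ]
          push_cast
          simp
        · rw [if_neg (by omega : ¬ a - 1 + b = e), if_neg (by omega : ¬ a + (b-1) = e),
            if_neg he, add_zero]

lemma dF_mul_fact (s k : ℕ) : (s+k).descFactorial k * s.factorial = (s+k).factorial := by
  have h := Nat.factorial_mul_descFactorial (Nat.le_add_left k s)
  have h2 : s + k - k = s := by omega
  rw [h2] at h
  rw [mul_comm]
  exact h

lemma key_nat (s t k : ℕ) :
    (s+k).descFactorial k * (s+t+k).choose (s+k)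
      = (t+k).descFactorial k * (s+t+k).choose s := by
  apply Nat.eq_of_mul_eq_mul_right (show 0 < s.factorial * t.factorial by positivity)
  have h1 : (s+k).descFactorial k * (s+t+k).choose (s+k) * (s.factorial * t.factorial)
      = (s+t+k).choose (s+k) * (s+k).factorial * t.factorial := by
    rw [← dF_mul_fact s k]; ring
  have h2 : (t+k).descFactorial k * (s+t+k).choose s * (s.factorial * t.factorial)
      = (s+t+k).choose s * s.factorial * (t+k).factorial := by
    rw [← dF_mul_fact t k]; ring
  rw [h1, h2]
  have e1 : s + t + k - (s+k) = t := by omega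
  have e2 : s + t + k - s = t + k := by omega
  rw [show (s+t+k).choose (s+k) * (s+k).factorial * t.factorial
      = (s+t+k).choose (s+k) * (s+k).factorial * (s+t+k-(s+k)).factorial by rw [e1]]
  rw [show (s+t+k).choose s * s.factorial * (t+k).factorial
      = (s+t+k).choose s * s.factorial * (s+t+k-s).factorial by rw [e2]]
  rw [Nat.choose_mul_factorial_mul_factorial (by omega),
    Nat.choose_mul_factorial_mul_factorial (by omega)]

-- a * C(d,a) = d * C(d-1, a-1)  for a = a'+1, d = e+1
lemma idA (e a' : ℕ) :
    ((a' + 1 : ℕ) : ℂ) * ((e+1).choose (a'+1) : ℂ) = ((e+1 : ℕ) : ℂ) * (e.choose a' : ℂ) := by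
  have h := Nat.add_one_mul_choose_eq e a'
  have := congrArg (fun n : ℕ => (n : ℂ)) h
  push_cast at this ⊢
  linear_combination -this

-- (d - a) * C(d,a) = d * C(d-1, a)  for d = e+1, a ≤ e+1
lemma idB (e a : ℕ) :
    (((e+1 : ℕ) : ℂ) - (a:ℂ)) * ((e+1).choose a : ℂ) = ((e+1:ℕ) : ℂ) * (e.choose a : ℂ) := by
  by_cases h : a ≤ e + 1
  · have h1 := Nat.choose_succ_right_eq (e+1) a
    have h2 := Nat.add_one_mul_choose_eq e a
    have hc1 := congrArg (fun n : ℕ => (n : ℂ)) h1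
    have hc2 := congrArg (fun n : ℕ => (n : ℂ)) h2
    have hsub : ((e + 1 - a : ℕ) : ℂ) = ((e+1:ℕ):ℂ) - (a:ℂ) := by
      push_cast [h]; ring
    simp only [Nat.cast_mul] at hc1 hc2
    rw [hsub] at hc1
    push_cast at hc1 hc2 ⊢
    linear_combination -hc1 - hc2
  · have h1 : (e+1).choose a = 0 := Nat.choose_eq_zero_of_lt (by omega)
    have h2 : e.choose a = 0 := Nat.choose_eq_zero_of_lt (by omega)
    rw [h1, h2]
    push_cast
    ring

lemma cf_w (d : ℕ) (hd : 1 ≤ d) (a b : ℕ) :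
    cf ((X 0 - X 1) * (X 0 + X 1)^(d-1)) a b = if a + b = d then gam d a else 0 := by
  obtain ⟨e, rfl⟩ : ∃ e, d = e + 1 := ⟨d - 1, by omega⟩
  have hd0 : ((e+1 : ℕ) : ℂ) ≠ 0 := Nat.cast_ne_zero.mpr (by omega)
  rw [show e + 1 - 1 = e from rfl, sub_mul, cf_sub, cf_X0_mul, cf_X1_mul, cf_pow, cf_pow]
  by_cases he : a + b = e + 1
  · rw [if_pos he, gam]
    by_cases ha : a = 0
    · subst ha
      rw [if_pos rfl, if_neg (by omega : ¬ b = 0), if_pos (by omega : 0 + (b-1) = e)]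
      simp only [Nat.choose_zero_right, Nat.cast_one, Nat.cast_zero]
      rw [eq_div_iff hd0]
      push_cast
      ring
    · obtain ⟨a', rfl⟩ : ∃ a', a = a' + 1 := ⟨a - 1, by omega⟩
      rw [if_neg ha]
      by_cases hb : b = 0
      · subst hb
        rw [if_pos rfl, if_pos (by omega : a' + 1 - 1 + 0 = e), sub_zero]
        have ha' : a' = e := by omega
        subst ha'
        simp only [Nat.add_sub_cancel, Nat.choose_self, Nat.cast_one]
        rw [eq_div_iff hd0]
        push_cast
        ring
      · rw [if_neg hb, if_pos (by omega : a' + 1 - 1 + b = e), if_pos (by omega : a' + 1 + (b-1) = e)]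
        have hA := idA e a'
        have hB := idB e (a'+1)
        rw [show a' + 1 - 1 = a' by omega, eq_div_iff hd0]
        push_cast at hA hB ⊢
        linear_combination hB - hA
  · rw [if_neg he]
    have h1 : (if a = 0 then (0:ℂ) else if a - 1 + b = e then ((e.choose (a-1) : ℕ) : ℂ) else 0) = 0 := by
      by_cases ha : a = 0
      · rw [if_pos ha]
      · rw [if_neg ha, if_neg (by omega)]
    have h2 : (if b = 0 then (0:ℂ) else if a + (b-1) = e then ((e.choose a : ℕ) : ℂ) else 0) = 0 := by
      by_cases hb : b = 0
      · rw [if_pos hb]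
      · rw [if_neg hb, if_neg (by omega)]
    rw [h1, h2, sub_zero]

lemma hfac (j : ℕ) : ((j.factorial : ℕ) : ℂ) ≠ 0 :=
  Nat.cast_ne_zero.mpr (Nat.factorial_ne_zero j)

lemma Aw_zero (q : ℂ) (k : ℕ) : Aw q 0 k = (k.factorial : ℂ) := by
  rw [Aw, zero_add, Nat.descFactorial_self]
  push_cast; ring

lemma vanish (q : ℂ) (p : MvPolynomial (Fin 2) ℂ)
    (H : ∀ k, 1 ≤ k → ∀ s t : ℕ, Aw q s k * cf p (s+k) t + Aw q t k * cf p s (t+k) = 0)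
    (m : ℕ) (hm : 2 ≤ m) (hq : 2 + q * m ≠ 0) : ∀ a b, a + b = m → cf p a b = 0 := by
  have hm0 : ((m:ℕ):ℂ) ≠ 0 := Nat.cast_ne_zero.mpr (by omega)
  -- step 1 : cf p 0 m = - cf p m 0
  have h3 := H m (by omega) 0 0
  rw [show (0:ℕ) + m = m from by omega, Aw_zero] at h3
  have h3' : ((m.factorial:ℕ):ℂ) * (cf p m 0 + cf p 0 m) = 0 := by linear_combination h3
  have hsum : cf p 0 m = - cf p m 0 := by
    have := (mul_eq_zero.mp h3').resolve_left (hfac m)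
    linear_combination this
  -- step 2 : equations at (m-1,0,1) and (0,1,m-1)
  have hm1 : (m - 1) + 1 = m := by omega
  have hE1 := H 1 le_rfl (m-1) 0
  rw [hm1, zero_add, Aw_zero, Nat.factorial_one, Nat.cast_one, one_mul] at hE1
  have hE2 := H (m-1) (by omega) 0 1
  rw [zero_add, Aw_zero] at hE2
  rw [show 1 + (m-1) = m by omega] at hE2
  rw [hsum] at hE2
  -- compute the two weights
  have hcast : ((m-1 : ℕ) : ℂ) = (m:ℂ) - 1 := by
    push_cast [Nat.cast_sub (by omega : 1 ≤ m)]; ring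
  have hAw1 : Aw q (m-1) 1 = (m:ℂ) * (1 + q * ((m:ℂ)-1)) := by
    rw [Aw, hm1, Nat.descFactorial_one, hcast]
  have hAw2 : Aw q 1 (m-1) = ((m-1).factorial : ℂ) * (m:ℂ) * (1 + q) := by
    rw [Aw, show 1 + (m-1) = m by omega]
    have h2 : (m.descFactorial (m-1) : ℂ) = ((m-1).factorial : ℂ) * (m:ℂ) := by
      have h4 := dF_mul_fact 1 (m-1)
      rw [show 1 + (m-1) = m by omega, Nat.factorial_one, mul_one] at h4
      have h5 : m.factorial = m * (m-1).factorial := by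
        conv_lhs => rw [show m = (m-1)+1 by omega]
        rw [Nat.factorial_succ, hm1]
      rw [h4, h5]; push_cast; ring
    rw [h2]; push_cast; ring
  rw [hAw1] at hE1
  rw [hAw2] at hE2
  -- combine
  have hX : cf p m 0 * (((m-1).factorial : ℂ) * (m:ℂ) * (2 + q * m)) = 0 := by
    linear_combination ((m-1).factorial : ℂ) * hE1 - hE2
  have hX0 : cf p m 0 = 0 := by
    rcases mul_eq_zero.mp hX with h | h
    · exact h
    · exfalso
      rcases mul_eq_zero.mp h with h' | h'
      · rcases mul_eq_zero.mp h' with h'' | h''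
        · exact hfac _ h''
        · exact hm0 h''
      · exact hq h'
  have hZ0 : cf p 0 m = 0 := by rw [hsum, hX0, neg_zero]
  intro a b hab
  rcases Nat.eq_zero_or_pos b with hb | hb
  · subst hb; rw [show a = m by omega] at *; exact hX0
  · have hE := H b (by omega) a 0
    rw [hab, zero_add, Aw_zero, hX0, mul_zero, zero_add] at hE
    exact (mul_eq_zero.mp hE).resolve_left (hfac b)

lemma degd (d : ℕ) (hd : 2 ≤ d) (p : MvPolynomial (Fin 2) ℂ)
    (H : ∀ k, 1 ≤ k → ∀ s t : ℕ,
      Aw (-2/(d:ℂ)) s k * cf p (s+k) t + Aw (-2/(d:ℂ)) t k * cf p s (t+k) = 0) :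
    ∀ a b, a + b = d → cf p a b = (- cf p 0 d) * gam d a := by
  have hd0 : ((d:ℕ):ℂ) ≠ 0 := Nat.cast_ne_zero.mpr (by omega)
  intro a b hab
  rcases Nat.eq_zero_or_pos a with ha | ha
  · subst ha
    rw [show b = d by omega, gam, Nat.choose_zero_right]
    field_simp
    push_cast; ring
  · have hE := H a (by omega) 0 b
    rw [zero_add, Aw_zero, show b + a = d by omega] at hE
    have hcast : (a:ℂ) + (b:ℂ) = (d:ℂ) := by exact_mod_cast congrArg (Nat.cast : ℕ → ℂ) hab
    have hAwba : Aw (-2/(d:ℂ)) b a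
        = ((a.factorial : ℕ):ℂ) * (d.choose a : ℂ) * ((2*(a:ℂ) - (d:ℂ))/(d:ℂ)) := by
      rw [Aw, show b + a = d by omega]
      have h1 : ((d.descFactorial a : ℕ):ℂ) = ((a.factorial:ℕ):ℂ) * (d.choose a : ℂ) := by
        rw [Nat.descFactorial_eq_factorial_mul_choose]; push_cast; ring
      rw [h1]
      have h2 : 1 + (-2/(d:ℂ)) * b = (2*(a:ℂ) - (d:ℂ))/(d:ℂ) := by
        field_simp
        linear_combination (-2 : ℂ) * hcast
      rw [h2]
    rw [hAwba] at hE
    apply mul_left_cancel₀ (hfac a)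
    rw [gam]
    field_simp at hE ⊢
    linear_combination hE

lemma harm_one_cf (q : ℂ) : ∀ k, 1 ≤ k → ∀ s t : ℕ,
    Aw q s k * cf 1 (s+k) t + Aw q t k * cf 1 s (t+k) = 0 := by
  intro k hk s t
  rw [cf_one, cf_one, if_neg (by omega), if_neg (by omega), mul_zero, mul_zero, add_zero]

lemma harm_xy_cf (q : ℂ) : ∀ k, 1 ≤ k → ∀ s t : ℕ,
    Aw q s k * cf (X 0 - X 1) (s+k) t + Aw q t k * cf (X 0 - X 1) s (t+k) = 0 := by
  intro k hk s t
  rw [cf_sub, cf_sub, cf_X0, cf_X0, cf_X1, cf_X1]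
  by_cases h : k = 1 ∧ s = 0 ∧ t = 0
  · obtain ⟨rfl, rfl, rfl⟩ := h
    norm_num [Aw]
  · rw [if_neg (by omega), if_neg (by omega), if_neg (by omega), if_neg (by omega)]
    ring

lemma harm_w_cf (d : ℕ) (hd : 2 ≤ d) : ∀ k, 1 ≤ k → ∀ s t : ℕ,
    Aw (-2/(d:ℂ)) s k * cf ((X 0 - X 1) * (X 0 + X 1)^(d-1)) (s+k) t
      + Aw (-2/(d:ℂ)) t k * cf ((X 0 - X 1) * (X 0 + X 1)^(d-1)) s (t+k) = 0 := by
  intro k hk s t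
  rw [cf_w d (by omega), cf_w d (by omega)]
  by_cases hstk : s + k + t = d
  · rw [if_pos (by omega), if_pos (by omega)]
    have hd0 : ((d:ℕ):ℂ) ≠ 0 := Nat.cast_ne_zero.mpr (by omega)
    have hcast : (s:ℂ) + (t:ℂ) + (k:ℂ) = (d:ℂ) := by
      exact_mod_cast congrArg (Nat.cast : ℕ → ℂ) (show s + t + k = d by omega)
    have hkey : (((s+k).descFactorial k : ℕ):ℂ) * ((d.choose (s+k) : ℕ):ℂ)
        = (((t+k).descFactorial k : ℕ):ℂ) * ((d.choose s : ℕ):ℂ) := by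
      have := key_nat s t k
      rw [show s + t + k = d by omega] at this
      exact_mod_cast congrArg (Nat.cast : ℕ → ℂ) this
    rw [Aw, Aw, gam, gam]
    push_cast
    rw [← hcast]
    have h0 : (s:ℂ) + (t:ℂ) + (k:ℂ) ≠ 0 := by rw [hcast]; exact hd0
    field_simp
    linear_combination ((t:ℂ)+k-s) * ((s:ℂ)+k-t) * hkey
  · rw [if_neg (by omega), if_neg (by omega), mul_zero, mul_zero, add_zero]


lemma cf_smul (c : ℂ) (p : MvPolynomial (Fin 2) ℂ) (a b : ℕ) :
    cf (c • p) a b = c * cf p a b := by simp [cf]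

lemma cf_ext {p r : MvPolynomial (Fin 2) ℂ} (h : ∀ a b, cf p a b = cf r a b) : p = r := by
  apply MvPolynomial.ext
  intro m
  have := h (m 0) (m 1)
  rw [cf, cf] at this
  rw [fin2_eta m]
  exact this

lemma h01_of (q : ℂ) (p : MvPolynomial (Fin 2) ℂ)
    (H : ∀ k, 1 ≤ k → ∀ s t : ℕ, Aw q s k * cf p (s+k) t + Aw q t k * cf p s (t+k) = 0) :
    cf p 0 1 = - cf p 1 0 := by
  have h := H 1 le_rfl 0 0
  rw [show (0:ℕ) + 1 = 1 by omega, Aw_zero, Nat.factorial_one, Nat.cast_one, one_mul, one_mul] at h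
  linear_combination h


end QH18

open QH18 in
/-- The `q_0`-harmonics in `ℂ[x,y]` are spanned by `1` and `x − y`
when `q_0` is not of the form `−2/d` for an integer `d ≥ 2`, and by `1`, `x − y` and
`(x − y)(x + y)^{d−1}` when `q_0 = −2/d` with `d ≥ 2`. -/
theorem qHarmonic_two_vars_classification (q0 : ℂ) :
    ((∀ d : ℕ, 2 ≤ d → q0 ≠ -2 / (d : ℂ)) →
      {p : MvPolynomial (Fin 2) ℂ | IsQHarmonic q0 p}
        = ↑(Submodule.span ℂ
            ({1, X 0 - X 1} : Set (MvPolynomial (Fin 2) ℂ)))) ∧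
    (∀ d : ℕ, 2 ≤ d → q0 = -2 / (d : ℂ) →
      {p : MvPolynomial (Fin 2) ℂ | IsQHarmonic q0 p}
        = ↑(Submodule.span ℂ
            ({1, X 0 - X 1, (X 0 - X 1) * (X 0 + X 1) ^ (d - 1)} :
              Set (MvPolynomial (Fin 2) ℂ)))) := by
  constructor
  · -- generic case
    intro hq
    ext p
    simp only [Set.mem_setOf_eq, SetLike.mem_coe]
    constructor
    · intro hp
      have H := (harmonic_iff q0 p).mp hp
      have h01 := h01_of q0 p H
      have hvan : ∀ a b : ℕ, 2 ≤ a + b → cf p a b = 0 := by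
        intro a b hab
        refine vanish q0 p H (a+b) hab ?_ a b rfl
        intro hcontra
        have hm0 : (((a+b) : ℕ):ℂ) ≠ 0 := Nat.cast_ne_zero.mpr (by omega)
        apply hq (a+b) hab
        rw [eq_div_iff hm0]
        push_cast at hcontra ⊢
        linear_combination hcontra
      apply Submodule.mem_span_pair.mpr
      refine ⟨cf p 0 0, cf p 1 0, ?_⟩
      apply cf_ext
      intro a b
      rw [cf_add, cf_smul, cf_smul, cf_one, cf_sub, cf_X0, cf_X1]
      have hcase : (a = 0 ∧ b = 0) ∨ (a = 1 ∧ b = 0) ∨ (a = 0 ∧ b = 1) ∨ 2 ≤ a + b := by omega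
      rcases hcase with ⟨rfl, rfl⟩ | ⟨rfl, rfl⟩ | ⟨rfl, rfl⟩ | h2
      · norm_num
      · norm_num
      · norm_num [h01]
      · rw [if_neg (by omega), if_neg (by omega), if_neg (by omega), hvan a b h2]
        ring
    · intro hp
      obtain ⟨α, β, rfl⟩ := Submodule.mem_span_pair.mp hp
      rw [harmonic_iff]
      intro k hk s t
      rw [cf_add, cf_add, cf_smul, cf_smul, cf_smul, cf_smul]
      linear_combination α * harm_one_cf q0 k hk s t + β * harm_xy_cf q0 k hk s t
  · -- special case q0 = -2/d
    intro d hd hqd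
    subst hqd
    have hd0 : ((d:ℕ):ℂ) ≠ 0 := Nat.cast_ne_zero.mpr (by omega)
    ext p
    simp only [Set.mem_setOf_eq, SetLike.mem_coe]
    constructor
    · intro hp
      have H := (harmonic_iff _ p).mp hp
      have h01 := h01_of _ p H
      have hvan : ∀ a b : ℕ, 2 ≤ a + b → a + b ≠ d → cf p a b = 0 := by
        intro a b hab hne
        refine vanish _ p H (a+b) hab ?_ a b rfl
        intro hcontra
        apply hne
        have hcd : (((a+b) : ℕ):ℂ) = (d:ℂ) := by
          field_simp at hcontra
          push_cast at hcontra ⊢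
          linear_combination -hcontra / 2
        exact_mod_cast hcd
      have hdeg := degd d hd p H
      rw [Submodule.mem_span_insert]
      refine ⟨cf p 0 0,
        cf p 1 0 • (X 0 - X 1) + (- cf p 0 d) • ((X 0 - X 1) * (X 0 + X 1)^(d-1)),
        Submodule.mem_span_pair.mpr ⟨cf p 1 0, - cf p 0 d, rfl⟩, ?_⟩
      apply cf_ext
      intro a b
      rw [cf_add, cf_add, cf_smul, cf_smul, cf_smul, cf_one, cf_sub, cf_X0, cf_X1,
        cf_w d (by omega)]
      have hcase : (a = 0 ∧ b = 0) ∨ (a = 1 ∧ b = 0) ∨ (a = 0 ∧ b = 1)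
          ∨ (2 ≤ a + b ∧ a + b = d) ∨ (2 ≤ a + b ∧ a + b ≠ d) := by omega
      rcases hcase with ⟨rfl, rfl⟩ | ⟨rfl, rfl⟩ | ⟨rfl, rfl⟩ | ⟨h2, hde⟩ | ⟨h2, hde⟩
      · rw [if_neg (show (0:ℕ) + 0 ≠ d by omega)]; norm_num
      · rw [if_neg (show (1:ℕ) + 0 ≠ d by omega)]; norm_num
      · rw [if_neg (show (0:ℕ) + 1 ≠ d by omega)]; norm_num [h01]
      · rw [if_pos hde, if_neg (show ¬(a = 0 ∧ b = 0) by omega),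
          if_neg (show ¬(a = 1 ∧ b = 0) by omega),
          if_neg (show ¬(a = 0 ∧ b = 1) by omega), hdeg a b hde]
        ring
      · rw [if_neg hde, if_neg (show ¬(a = 0 ∧ b = 0) by omega),
          if_neg (show ¬(a = 1 ∧ b = 0) by omega),
          if_neg (show ¬(a = 0 ∧ b = 1) by omega), hvan a b h2 hde]
        ring
    · intro hp
      rw [Submodule.mem_span_insert] at hp
      obtain ⟨α, z, hz, rfl⟩ := hp
      obtain ⟨β, γ, rfl⟩ := Submodule.mem_span_pair.mp hz
      rw [harmonic_iff]
      intro k hk s t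
      rw [cf_add, cf_add, cf_add, cf_add, cf_smul, cf_smul, cf_smul, cf_smul,
        cf_smul, cf_smul]
      linear_combination α * harm_one_cf _ k hk s t + β * harm_xy_cf _ k hk s t
        + γ * harm_w_cf d hd k hk s t
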